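/- Let n ≥ 1 and N = 2n, let λ : Fin N → ℂ and Ω ∈ ℝ, and let W⁰ : Fin N → (Fin 2 →₀ ℕ) → ℂ, R⁰ : Fin 2 → (Fin 2 →₀ ℕ) → ℂ satisfy the tangency normalizations. Let W¹ : Fin N → (Fin 2 →₀ ℕ) → ℝ → ℂ and R¹ : Fin 2 → (Fin 2 →₀ ℕ) → ℝ → ℂ be families of functions of the phase φ ∈ ℝ, with each W¹ i k differentiable, and let F : Fin N → (Fin 2 →₀ ℕ) → ℝ → ℂ and H : Fin N → (Fin 2 →₀ ℕ) → ℝ → ℂ be given families. Fix i ∈ Fin N, a multi-index k, and φ ∈ ℝ. Then the k-th coefficient equation of row i of the order-ε invariance equation, namely λ i · W¹ i k φ + H i k φ + F i k φ = ∑_{j ∈ Fin 2} ∑_{(m,n) ∈ antidiagonal (k + e_j), m j > 0} (m j) · (W⁰ i m · R¹ j n φ + W¹ i m φ · R⁰ j n) + Ω · (deriv of W¹ i k at φ), holds if and only if (λ i − ∑_{j} (k j) · λ j) · W¹ i k φ − Ω · (deriv of W¹ i k at φ) = (if i < 2 then R¹ i k φ else 0) + P i k φ, where P i k φ := ∑_{j}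 ∑_{(m,n) ∈ antidiagonal (k + e_j), m j > 0, m ≠ e_j} (m j) · W⁰ i m · R¹ j n φ + ∑_{j} ∑_{(m,n) ∈ antidiagonal (k + e_j), m j > 0, m ≠ k} (m j) · W¹ i m φ · R⁰ j n − F i k φ − H i k φ. -/

import Mathlib

open Finset

lemma aux_split_e {β : Type*} [AddCommMonoid β] (k : Fin 2 →₀ ℕ) (j : Fin 2)
    (f : (Fin 2 →₀ ℕ) × (Fin 2 →₀ ℕ) → β) :
    ∑ p ∈ (Finset.HasAntidiagonal.antidiagonal (k + Finsupp.single j 1)).filter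
        (fun p : (Fin 2 →₀ ℕ) × (Fin 2 →₀ ℕ) => 0 < p.1 j), f p
    = (∑ p ∈ (Finset.HasAntidiagonal.antidiagonal (k + Finsupp.single j 1)).filter
        (fun p : (Fin 2 →₀ ℕ) × (Fin 2 →₀ ℕ) => 0 < p.1 j ∧ p.1 ≠ Finsupp.single j 1), f p)
      + f (Finsupp.single j 1, k) := by
  classical
  have hset : (Finset.HasAntidiagonal.antidiagonal (k + Finsupp.single j 1)).filter
        (fun p : (Fin 2 →₀ ℕ) × (Fin 2 →₀ ℕ) => 0 < p.1 j)
      = insert (Finsupp.single j 1, k)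
        ((Finset.HasAntidiagonal.antidiagonal (k + Finsupp.single j 1)).filter
          (fun p : (Fin 2 →₀ ℕ) × (Fin 2 →₀ ℕ) => 0 < p.1 j ∧ p.1 ≠ Finsupp.single j 1)) := by
    ext p
    simp only [Finset.mem_filter, Finset.HasAntidiagonal.mem_antidiagonal, Finset.mem_insert]
    constructor
    · rintro ⟨hp, hpos⟩
      by_cases h : p.1 = Finsupp.single j 1
      · left
        have : p.2 = k := by
          have := hp
          rw [h, add_comm k] at this
          exact add_left_cancel this
        exact Prod.ext h this
      · right; exact ⟨hp, hpos, h⟩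
    · rintro (rfl | ⟨hp, hpos, hne⟩)
      · exact ⟨by rw [add_comm], by simp⟩
      · exact ⟨hp, hpos⟩
  rw [hset, Finset.sum_insert]
  · ring_nf; rw [add_comm]
  · simp

lemma aux_split_k {β : Type*} [AddCommMonoid β] (k : Fin 2 →₀ ℕ) (j : Fin 2)
    (f : (Fin 2 →₀ ℕ) × (Fin 2 →₀ ℕ) → β) (hf0 : k j = 0 → f (k, Finsupp.single j 1) = 0) :
    ∑ p ∈ (Finset.HasAntidiagonal.antidiagonal (k + Finsupp.single j 1)).filter
        (fun p : (Fin 2 →₀ ℕ) × (Fin 2 →₀ ℕ) => 0 < p.1 j), f p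
    = (∑ p ∈ (Finset.HasAntidiagonal.antidiagonal (k + Finsupp.single j 1)).filter
        (fun p : (Fin 2 →₀ ℕ) × (Fin 2 →₀ ℕ) => 0 < p.1 j ∧ p.1 ≠ k), f p)
      + f (k, Finsupp.single j 1) := by
  classical
  by_cases hk : k j = 0
  · have hset : (Finset.HasAntidiagonal.antidiagonal (k + Finsupp.single j 1)).filter
        (fun p : (Fin 2 →₀ ℕ) × (Fin 2 →₀ ℕ) => 0 < p.1 j)
      = (Finset.HasAntidiagonal.antidiagonal (k + Finsupp.single j 1)).filter
          (fun p : (Fin 2 →₀ ℕ) × (Fin 2 →₀ ℕ) => 0 < p.1 j ∧ p.1 ≠ k) := by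
      ext p
      simp only [Finset.mem_filter, Finset.mem_antidiagonal]
      constructor
      · rintro ⟨hp, hpos⟩
        refine ⟨hp, hpos, fun h => ?_⟩
        rw [h, hk] at hpos; omega
      · rintro ⟨hp, hpos, _⟩; exact ⟨hp, hpos⟩
    rw [hset, hf0 hk, add_zero]
  · have hset : (Finset.HasAntidiagonal.antidiagonal (k + Finsupp.single j 1)).filter
        (fun p : (Fin 2 →₀ ℕ) × (Fin 2 →₀ ℕ) => 0 < p.1 j)
      = insert (k, Finsupp.single j 1)
        ((Finset.HasAntidiagonal.antidiagonal (k + Finsupp.single j 1)).filter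
          (fun p : (Fin 2 →₀ ℕ) × (Fin 2 →₀ ℕ) => 0 < p.1 j ∧ p.1 ≠ k)) := by
      ext p
      simp only [Finset.mem_filter, Finset.HasAntidiagonal.mem_antidiagonal, Finset.mem_insert]
      constructor
      · rintro ⟨hp, hpos⟩
        by_cases h : p.1 = k
        · left
          have : p.2 = Finsupp.single j 1 := by
            have := hp; rw [h] at this
            exact add_left_cancel this
          exact Prod.ext h this
        · right; exact ⟨hp, hpos, h⟩
      · rintro (rfl | ⟨hp, hpos, hne⟩)
        · exact ⟨rfl, Nat.pos_of_ne_zero hk⟩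
        · exact ⟨hp, hpos⟩
    rw [hset, Finset.sum_insert]
    · rw [add_comm]
    · simp


/-- The `k`-th coefficient equation of row `i` of the order-`ε` (non-autonomous) invariance
equation for the SSM parameterization, with autonomous coefficients `W⁰, R⁰`, non-autonomous
coefficients `W¹, R¹`, forcing coefficients `F` and nonlinearity-coupling coefficients `H`. -/
theorem nonautonomous_coefficient_equation
    (n : ℕ) (hn : 1 ≤ n) (N : ℕ) (hN : N = 2 * n)
    (lam : Fin N → ℂ) (Ω : ℝ)
    (W0 : Fin N → (Fin 2 →₀ ℕ) → ℂ)
    (R0 : Fin 2 → (Fin 2 →₀ ℕ) → ℂ)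
    (W1 : Fin N → (Fin 2 →₀ ℕ) → ℝ → ℂ)
    (R1 : Fin 2 → (Fin 2 →₀ ℕ) → ℝ → ℂ)
    (F : Fin N → (Fin 2 →₀ ℕ) → ℝ → ℂ)
    (H : Fin N → (Fin 2 →₀ ℕ) → ℝ → ℂ)
    (hW00 : ∀ i, W0 i 0 = 0)
    (hW01 : ∀ i (j : Fin 2), W0 i (Finsupp.single j 1) = if (i : ℕ) = (j : ℕ) then 1 else 0)
    (hR00 : ∀ j, R0 j 0 = 0)
    (hR01 : ∀ j l : Fin 2,
      R0 j (Finsupp.single l 1) = if j = l then lam (Fin.castLE (by omega) j) else 0)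
    (hW1diff : ∀ i k, Differentiable ℝ (W1 i k))
    (i : Fin N) (k : Fin 2 →₀ ℕ) (φ : ℝ) :
    (lam i * W1 i k φ + H i k φ + F i k φ =
      (∑ j : Fin 2,
        ∑ p ∈ (Finset.HasAntidiagonal.antidiagonal (k + Finsupp.single j 1)).filter
            (fun p : (Fin 2 →₀ ℕ) × (Fin 2 →₀ ℕ) => 0 < p.1 j),
          (p.1 j : ℂ) * (W0 i p.1 * R1 j p.2 φ + W1 i p.1 φ * R0 j p.2))
      + (Ω : ℂ) * deriv (W1 i k) φ)
    ↔
    ((lam i - ∑ j : Fin 2, (k j : ℂ) * lam (Fin.castLE (by omega) j)) * W1 i k φ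
        - (Ω : ℂ) * deriv (W1 i k) φ =
      (if h : (i : ℕ) < 2 then R1 ⟨i, h⟩ k φ else 0) +
      ((∑ j : Fin 2,
          ∑ p ∈ (Finset.HasAntidiagonal.antidiagonal (k + Finsupp.single j 1)).filter
              (fun p : (Fin 2 →₀ ℕ) × (Fin 2 →₀ ℕ) => 0 < p.1 j ∧ p.1 ≠ Finsupp.single j 1),
            (p.1 j : ℂ) * W0 i p.1 * R1 j p.2 φ)
       + (∑ j : Fin 2,
          ∑ p ∈ (Finset.HasAntidiagonal.antidiagonal (k + Finsupp.single j 1)).filter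
              (fun p : (Fin 2 →₀ ℕ) × (Fin 2 →₀ ℕ) => 0 < p.1 j ∧ p.1 ≠ k),
            (p.1 j : ℂ) * W1 i p.1 φ * R0 j p.2)
       - F i k φ - H i k φ)) := by
  classical
  have hlam : ∀ j : Fin 2, R0 j (Finsupp.single j 1) = lam (Fin.castLE (by omega) j) := by
    intro j; rw [hR01]; simp
  have expand : ∀ j : Fin 2,
      ∑ p ∈ (Finset.HasAntidiagonal.antidiagonal (k + Finsupp.single j 1)).filter
          (fun p : (Fin 2 →₀ ℕ) × (Fin 2 →₀ ℕ) => 0 < p.1 j),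
        (p.1 j : ℂ) * (W0 i p.1 * R1 j p.2 φ + W1 i p.1 φ * R0 j p.2)
      = ((∑ p ∈ (Finset.HasAntidiagonal.antidiagonal (k + Finsupp.single j 1)).filter
            (fun p : (Fin 2 →₀ ℕ) × (Fin 2 →₀ ℕ) => 0 < p.1 j ∧ p.1 ≠ Finsupp.single j 1),
          (p.1 j : ℂ) * W0 i p.1 * R1 j p.2 φ)
        + (∑ p ∈ (Finset.HasAntidiagonal.antidiagonal (k + Finsupp.single j 1)).filter
            (fun p : (Fin 2 →₀ ℕ) × (Fin 2 →₀ ℕ) => 0 < p.1 j ∧ p.1 ≠ k),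
          (p.1 j : ℂ) * W1 i p.1 φ * R0 j p.2))
        + (W0 i (Finsupp.single j 1) * R1 j k φ
           + (k j : ℂ) * W1 i k φ * R0 j (Finsupp.single j 1)) := by
    intro j
    have h1 := aux_split_e k j (fun p => (p.1 j : ℂ) * W0 i p.1 * R1 j p.2 φ)
    have h2 := aux_split_k k j (fun p => (p.1 j : ℂ) * W1 i p.1 φ * R0 j p.2)
      (by intro h; simp [h])
    calc ∑ p ∈ (Finset.HasAntidiagonal.antidiagonal (k + Finsupp.single j 1)).filter
          (fun p : (Fin 2 →₀ ℕ) × (Fin 2 →₀ ℕ) => 0 < p.1 j),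
        (p.1 j : ℂ) * (W0 i p.1 * R1 j p.2 φ + W1 i p.1 φ * R0 j p.2)
        = (∑ p ∈ (Finset.HasAntidiagonal.antidiagonal (k + Finsupp.single j 1)).filter
            (fun p : (Fin 2 →₀ ℕ) × (Fin 2 →₀ ℕ) => 0 < p.1 j),
          (p.1 j : ℂ) * W0 i p.1 * R1 j p.2 φ)
          + ∑ p ∈ (Finset.HasAntidiagonal.antidiagonal (k + Finsupp.single j 1)).filter
            (fun p : (Fin 2 →₀ ℕ) × (Fin 2 →₀ ℕ) => 0 < p.1 j),
          (p.1 j : ℂ) * W1 i p.1 φ * R0 j p.2 := by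
          rw [← Finset.sum_add_distrib]; exact Finset.sum_congr rfl fun p _ => by ring
      _ = _ := by rw [h1, h2]; simp only [Finsupp.single_eq_same, Nat.cast_one, one_mul]; ring
  have hC : ∑ j : Fin 2, W0 i (Finsupp.single j 1) * R1 j k φ
      = (if h : (i : ℕ) < 2 then R1 ⟨i, h⟩ k φ else 0) := by
    simp only [hW01, Fin.sum_univ_two, Fin.val_zero, Fin.val_one]
    by_cases h0 : (i : ℕ) = 0
    · simp [h0]
    · by_cases h1 : (i : ℕ) = 1
      · simp [h0, h1]
      · rw [if_neg h0, if_neg h1, dif_neg (by omega)]; ring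
  have hD : ∑ j : Fin 2, (k j : ℂ) * W1 i k φ * R0 j (Finsupp.single j 1)
      = (∑ j : Fin 2, (k j : ℂ) * lam (Fin.castLE (by omega) j)) * W1 i k φ := by
    rw [Finset.sum_mul]
    exact Finset.sum_congr rfl fun j _ => by rw [hlam j]; ring
  rw [show (∑ j : Fin 2,
        ∑ p ∈ (Finset.HasAntidiagonal.antidiagonal (k + Finsupp.single j 1)).filter
            (fun p : (Fin 2 →₀ ℕ) × (Fin 2 →₀ ℕ) => 0 < p.1 j),
          (p.1 j : ℂ) * (W0 i p.1 * R1 j p.2 φ + W1 i p.1 φ * R0 j p.2))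
      = ((∑ j : Fin 2,
          ∑ p ∈ (Finset.HasAntidiagonal.antidiagonal (k + Finsupp.single j 1)).filter
              (fun p : (Fin 2 →₀ ℕ) × (Fin 2 →₀ ℕ) => 0 < p.1 j ∧ p.1 ≠ Finsupp.single j 1),
            (p.1 j : ℂ) * W0 i p.1 * R1 j p.2 φ)
        + (∑ j : Fin 2,
          ∑ p ∈ (Finset.HasAntidiagonal.antidiagonal (k + Finsupp.single j 1)).filter
              (fun p : (Fin 2 →₀ ℕ) × (Fin 2 →₀ ℕ) => 0 < p.1 j ∧ p.1 ≠ k),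
            (p.1 j : ℂ) * W1 i p.1 φ * R0 j p.2))
        + ((if h : (i : ℕ) < 2 then R1 ⟨i, h⟩ k φ else 0)
           + (∑ j : Fin 2, (k j : ℂ) * lam (Fin.castLE (by omega) j)) * W1 i k φ)
      from by
        rw [← hC, ← hD]
        simp only [expand]
        rw [Finset.sum_add_distrib, Finset.sum_add_distrib, Finset.sum_add_distrib]]
  constructor <;> intro h <;> linear_combination h
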